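/- Let K ≥ 1 be an integer and L ≥ K a real number. Let D = {0, L·e_1, …, L·e_K} ⊂ ℝ^K and let Δ′_D be the set of probability distributions p on D with p(L·e_i) ≤ 1/L for every i ∈ {1,…,K}. Let Π be a finite nonempty set, A : Π → ℝ, and y : Π → {1,…,K}. Let ε be a Rademacher random vector in {−1,1}^K and let Z be a random variable independent of ε with P(Z = L) = K/L and P(Z = 0) = 1 − K/L. Then sup_{p∈Δ′_D} min_{i∈{1,…,K}} E_{ĉ∼p}[ ĉ(i) + sup_{π∈Π}( A_π − ĉ(y(π)) ) ] ≤ E_{ε,Z}[ sup_{π∈Π}( A_π + 2·ε(y(π))·Z ) ]. -/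

import Mathlib

open MeasureTheory ProbabilityTheory

/-- The law of a single Rademacher (uniform `{-1,1}`-valued) real random variable. -/
noncomputable def signLaw : Measure ℝ :=
  (2⁻¹ : ENNReal) • (Measure.dirac (-1) + Measure.dirac 1)

/-- The measure on `ℝ^K` corresponding to a probability distribution `p`
supported on a finite set `D` of vectors. -/
noncomputable def vecMeas {K : ℕ} (D : Finset (Fin K → ℝ)) (p : (Fin K → ℝ) → ℝ) :
    Measure (Fin K → ℝ) :=
  ∑ v ∈ D, ENNReal.ofReal (p v) • Measure.dirac v

/-- The finite set `D = {0, L e_1, …, L e_K} ⊆ ℝ^K`. -/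
noncomputable def bigD (K : ℕ) (L : ℝ) : Finset (Fin K → ℝ) :=
  insert (0 : Fin K → ℝ) (Finset.univ.image fun i : Fin K => Pi.single i L)

/-- The law of the `{0, L}`-valued random variable `Z` with `P(Z = L) = K/L`
and `P(Z = 0) = 1 - K/L`. -/
noncomputable def zLaw (K : ℕ) (L : ℝ) : Measure ℝ :=
  ENNReal.ofReal ((K : ℝ) / L) • Measure.dirac L
    + ENNReal.ofReal (1 - (K : ℝ) / L) • Measure.dirac 0

open scoped Classical

instance : IsProbabilityMeasure signLaw := by
  constructor; simp [signLaw]; rw [ENNReal.inv_two_add_inv_two]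

instance (K : ℕ) (L : ℝ) : IsFiniteMeasure (zLaw K L) := by
  constructor
  simp only [zLaw, Measure.add_apply, Measure.smul_apply, smul_eq_mul]
  exact ENNReal.add_lt_top.2 ⟨ENNReal.mul_lt_top ENNReal.ofReal_lt_top (by simp),
    ENNReal.mul_lt_top ENNReal.ofReal_lt_top (by simp)⟩

lemma integral_sum_smul_dirac {α : Type*} [MeasurableSpace α] {ι : Type*} (t : Finset ι)
    (w : ι → ENNReal) (hw : ∀ i ∈ t, w i ≠ ⊤) (x : ι → α) (f : α → ℝ) (hf : Measurable f) :
    ∫ a, f a ∂(∑ i ∈ t, w i • Measure.dirac (x i)) = ∑ i ∈ t, (w i).toReal * f (x i) := by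
  have hint : ∀ i ∈ t, Integrable f (w i • Measure.dirac (x i)) := by
    intro i hi
    refine Integrable.smul_measure ?_ (hw i hi)
    exact (integrable_const (f (x i))).congr (ae_eq_dirac' hf).symm
  rw [integral_finset_sum_measure hint]
  refine Finset.sum_congr rfl fun i hi => ?_
  rw [integral_smul_measure, integral_dirac' f _ hf.stronglyMeasurable, smul_eq_mul]

noncomputable def sgn {K : ℕ} (s : Fin K → Bool) : Fin K → ℝ := fun i => if s i then 1 else -1

lemma dirac_apply_ite {α : Type*} [MeasurableSpace α] (a : α) {u : Set α}
    (hu : MeasurableSet u) : Measure.dirac a u = if a ∈ u then 1 else 0 := by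
  rw [Measure.dirac_apply' a hu, Set.indicator_apply]
  simp

lemma pi_signLaw_eq (K : ℕ) :
    Measure.pi (fun _ : Fin K => signLaw)
      = ∑ s : Fin K → Bool, ((2 : ENNReal) ^ K)⁻¹ • Measure.dirac (sgn s) := by
  refine Measure.pi_eq fun t ht => ?_
  rw [Measure.finset_sum_apply]
  have hpi : MeasurableSet (Set.pi Set.univ t) := MeasurableSet.univ_pi ht
  have h1 : ∀ s : Fin K → Bool,
      (((2 : ENNReal) ^ K)⁻¹ • Measure.dirac (sgn s)) (Set.pi Set.univ t)
        = (2 : ENNReal)⁻¹ ^ K * ∏ i, (if sgn s i ∈ t i then 1 else 0) := by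
    intro s
    rw [Measure.smul_apply, smul_eq_mul, dirac_apply_ite _ hpi, ← ENNReal.inv_pow]
    congr 1
    rw [Finset.prod_boole]
    simp [Set.mem_univ_pi]
  simp_rw [h1]
  have h2 : ∀ i, signLaw (t i)
      = ∑ b : Bool, (2 : ENNReal)⁻¹ * (if (if b then (1:ℝ) else -1) ∈ t i then 1 else 0) := by
    intro i
    simp only [signLaw, Measure.smul_apply, Measure.add_apply, smul_eq_mul,
      dirac_apply_ite _ (ht i), Fintype.sum_bool, if_true, Bool.false_eq_true, if_false]
    ring
  simp_rw [h2]
  rw [Finset.prod_univ_sum]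
  rw [Fintype.piFinset_univ]
  refine Finset.sum_congr rfl fun s _ => ?_
  rw [Finset.prod_mul_distrib, Finset.prod_const]
  simp [sgn, Finset.card_univ]
  congr

/-- weight of an atom of the joint law -/
noncomputable def atomW (K : ℕ) (L : ℝ) (q : (Fin K → Bool) × Bool) : ENNReal :=
  ((2 : ENNReal) ^ K)⁻¹ *
    (if q.2 then ENNReal.ofReal ((K : ℝ) / L) else ENNReal.ofReal (1 - (K : ℝ) / L))

noncomputable def atomX (K : ℕ) (L : ℝ) (q : (Fin K → Bool) × Bool) : (Fin K → ℝ) × ℝ :=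
  (sgn q.1, if q.2 then L else 0)

lemma joint_eq (K : ℕ) (L : ℝ) :
    (Measure.pi fun _ : Fin K => signLaw).prod (zLaw K L)
      = ∑ q : (Fin K → Bool) × Bool, atomW K L q • Measure.dirac (atomX K L q) := by
  refine Measure.prod_eq fun u v hu hv => ?_
  rw [Measure.finset_sum_apply]
  have huv : MeasurableSet (u ×ˢ v) := hu.prod hv
  have h1 : ∀ q : (Fin K → Bool) × Bool,
      (atomW K L q • Measure.dirac (atomX K L q)) (u ×ˢ v)
        = (((2 : ENNReal) ^ K)⁻¹ * (if sgn q.1 ∈ u then 1 else 0)) *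
          ((if q.2 then ENNReal.ofReal ((K : ℝ) / L) else ENNReal.ofReal (1 - (K : ℝ) / L)) *
            (if (if q.2 then L else (0:ℝ)) ∈ v then 1 else 0)) := by
    intro q
    rw [Measure.smul_apply, smul_eq_mul, dirac_apply_ite _ huv]
    have : (atomX K L q ∈ u ×ˢ v) = (sgn q.1 ∈ u ∧ (if q.2 then L else (0:ℝ)) ∈ v) := by
      simp [atomX, Set.mem_prod]
    rw [this, atomW]
    by_cases h1 : sgn q.1 ∈ u <;> by_cases h2 : (if q.2 then L else (0:ℝ)) ∈ v <;>
      simp [h1, h2]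
  simp_rw [h1]
  rw [Fintype.sum_prod_type]
  have hπ : (Measure.pi fun _ : Fin K => signLaw) u
      = ∑ x : Fin K → Bool, ((2 : ENNReal) ^ K)⁻¹ * (if sgn x ∈ u then 1 else 0) := by
    rw [pi_signLaw_eq K, Measure.finset_sum_apply]
    simp_rw [Measure.smul_apply, smul_eq_mul, dirac_apply_ite _ hu]
  have hz : (zLaw K L) v = ∑ b : Bool,
      (if b then ENNReal.ofReal ((K : ℝ) / L) else ENNReal.ofReal (1 - (K : ℝ) / L)) *
        (if (if b then L else (0:ℝ)) ∈ v then 1 else 0) := by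
    simp only [zLaw, Measure.add_apply, Measure.smul_apply, smul_eq_mul,
      dirac_apply_ite _ hv, Fintype.sum_bool, if_true, Bool.false_eq_true, if_false]
  rw [hπ, hz]
  exact (Fintype.sum_mul_sum
    (fun x : Fin K → Bool => ((2 : ENNReal) ^ K)⁻¹ * (if sgn x ∈ u then 1 else 0))
    (fun b : Bool =>
      (if b then ENNReal.ofReal ((K : ℝ) / L) else ENNReal.ofReal (1 - (K : ℝ) / L)) *
        (if (if b then L else (0:ℝ)) ∈ v then 1 else 0))).symm

def sflip {K : ℕ} (j : Fin K) (s : Fin K → Bool) : Fin K → Bool :=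
  Function.update s j (!s j)

lemma sflip_apply_same {K : ℕ} (j : Fin K) (s : Fin K → Bool) : sflip j s j = !s j := by
  simp [sflip]

lemma sflip_apply_ne {K : ℕ} {i j : Fin K} (h : i ≠ j) (s : Fin K → Bool) :
    sflip j s i = s i := by
  simp [sflip, Function.update_of_ne h]

lemma sflip_invol {K : ℕ} (j : Fin K) : Function.Involutive (sflip j) := by
  intro s
  funext i
  by_cases h : i = j
  · subst h; simp [sflip_apply_same]
  · simp [sflip_apply_ne h]

lemma sum_sflip {K : ℕ} (j : Fin K) (h : (Fin K → Bool) → ℝ) :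
    ∑ s : Fin K → Bool, h (sflip j s) = ∑ s : Fin K → Bool, h s :=
  Fintype.sum_bijective (sflip j) (sflip_invol j).bijective _ _ (fun _ => rfl)

lemma sgn_sflip_same {K : ℕ} (j : Fin K) (s : Fin K → Bool) :
    sgn (sflip j s) j = - sgn s j := by
  rcases hb : s j <;> simp [sgn, sflip_apply_same, hb]

lemma sgn_sflip_ne {K : ℕ} {i j : Fin K} (h : i ≠ j) (s : Fin K → Bool) :
    sgn (sflip j s) i = sgn s i := by
  simp [sgn, sflip_apply_ne h]

lemma card_bool_fun (K : ℕ) : (Fintype.card (Fin K → Bool) : ℝ) = 2 ^ K := by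
  rw [Fintype.card_fun]
  push_cast
  simp

lemma claim_T {K : ℕ} {P : Type*} [Fintype P] [Nonempty P] (A : P → ℝ) (y : P → Fin K)
    (L : ℝ) (π0 : P) :
    (2:ℝ) ^ K * A π0 ≤ ∑ s : Fin K → Bool,
      Finset.univ.sup' Finset.univ_nonempty (fun π => A π + 2 * sgn s (y π) * L) := by
  set gE : (Fin K → Bool) → ℝ := fun s =>
    Finset.univ.sup' Finset.univ_nonempty (fun π => A π + 2 * sgn s (y π) * L) with hgE
  set j := y π0
  have h2 : ∑ s : Fin K → Bool, (gE s + gE (sflip j s)) = 2 * ∑ s : Fin K → Bool, gE s := by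
    rw [Finset.sum_add_distrib, sum_sflip j gE]; ring
  have hpt : ∀ s : Fin K → Bool, 2 * A π0 ≤ gE s + gE (sflip j s) := by
    intro s
    have b1 : A π0 + 2 * sgn s (y π0) * L ≤ gE s :=
      Finset.le_sup' (fun π => A π + 2 * sgn s (y π) * L) (Finset.mem_univ π0)
    have b2 : A π0 + 2 * sgn (sflip j s) (y π0) * L ≤ gE (sflip j s) :=
      Finset.le_sup' (fun π => A π + 2 * sgn (sflip j s) (y π) * L) (Finset.mem_univ π0)
    have hj : sgn (sflip j s) (y π0) = - sgn s (y π0) := sgn_sflip_same j s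
    rw [hj] at b2
    linarith
  have := Finset.sum_le_sum (s := Finset.univ) (fun s _ => hpt s)
  rw [h2, Finset.sum_const, Finset.card_univ, nsmul_eq_mul] at this
  rw [card_bool_fun K] at this
  linarith

lemma claim_T2 {K : ℕ} {P : Type*} [Fintype P] [Nonempty P] (A : P → ℝ) (y : P → Fin K)
    (L : ℝ) (π0 π1 : P) (hne : y π1 ≠ y π0) :
    (2:ℝ) ^ K * (3 * A π0 + A π1 + 4 * L) ≤ 4 * ∑ s : Fin K → Bool,
      Finset.univ.sup' Finset.univ_nonempty (fun π => A π + 2 * sgn s (y π) * L) := by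
  set gE : (Fin K → Bool) → ℝ := fun s =>
    Finset.univ.sup' Finset.univ_nonempty (fun π => A π + 2 * sgn s (y π) * L) with hgE
  set j0 := y π0 with hj0
  set j1 := y π1 with hj1
  have h4 : ∑ s : Fin K → Bool,
      (gE s + gE (sflip j0 s) + gE (sflip j1 s) + gE (sflip j0 (sflip j1 s)))
      = 4 * ∑ s : Fin K → Bool, gE s := by
    rw [Finset.sum_add_distrib, Finset.sum_add_distrib, Finset.sum_add_distrib,
      sum_sflip j0 gE, sum_sflip j1 gE,
      sum_sflip j1 (fun s => gE (sflip j0 s)), sum_sflip j0 gE]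
    ring
  have hpt : ∀ s : Fin K → Bool, 3 * A π0 + A π1 + 4 * L
      ≤ gE s + gE (sflip j0 s) + gE (sflip j1 s) + gE (sflip j0 (sflip j1 s)) := by
    intro s
    have b0 : ∀ t : Fin K → Bool, A π0 + 2 * sgn t j0 * L ≤ gE t := fun t =>
      Finset.le_sup' (fun π => A π + 2 * sgn t (y π) * L) (Finset.mem_univ π0)
    have b1 : ∀ t : Fin K → Bool, A π1 + 2 * sgn t j1 * L ≤ gE t := fun t =>
      Finset.le_sup' (fun π => A π + 2 * sgn t (y π) * L) (Finset.mem_univ π1)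
    have hne' : j0 ≠ j1 := Ne.symm hne
    have s2_0 : sgn (sflip j0 s) j0 = - sgn s j0 := sgn_sflip_same j0 s
    have s2_1 : sgn (sflip j0 s) j1 = sgn s j1 := sgn_sflip_ne hne s
    have s3_0 : sgn (sflip j1 s) j0 = sgn s j0 := sgn_sflip_ne hne' s
    have s3_1 : sgn (sflip j1 s) j1 = - sgn s j1 := sgn_sflip_same j1 s
    have s4_0 : sgn (sflip j0 (sflip j1 s)) j0 = - sgn s j0 := by
      rw [sgn_sflip_same j0 (sflip j1 s), s3_0]
    have s4_1 : sgn (sflip j0 (sflip j1 s)) j1 = - sgn s j1 := by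
      rw [sgn_sflip_ne hne (sflip j1 s), s3_1]
    have B10 := b0 s; have B11 := b1 s
    have B20 := b0 (sflip j0 s); have B21 := b1 (sflip j0 s)
    have B30 := b0 (sflip j1 s); have B31 := b1 (sflip j1 s)
    have B40 := b0 (sflip j0 (sflip j1 s)); have B41 := b1 (sflip j0 (sflip j1 s))
    rw [s2_0] at B20; rw [s2_1] at B21
    rw [s3_0] at B30; rw [s3_1] at B31
    rw [s4_0] at B40; rw [s4_1] at B41
    cases h0 : s j0 <;> cases h1 : s j1 <;> simp only [sgn, h0, h1, if_true, Bool.false_eq_true, if_false] at B10 B11 B20 B21 B30 B31 B40 B41 <;> linarith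
  have := Finset.sum_le_sum (s := Finset.univ) (fun s _ => hpt s)
  rw [h4, Finset.sum_const, Finset.card_univ, nsmul_eq_mul] at this
  rw [card_bool_fun K] at this
  linarith

/-- **Core minimax inequality of the admissibility proof.**
Let `K ≥ 1`, `L ≥ K`, `D = {0, L e_1, …, L e_K}` and let `Δ'_D` be the set of
probability distributions `p` on `D` with `p(L e_i) ≤ 1/L` for all `i`. Let `ε` be a
Rademacher random vector in `{-1,1}^K` and `Z` independent of `ε` with
`P(Z = L) = K/L`, `P(Z = 0) = 1 - K/L` (encoded by the product-form joint law). Then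
`sup_{p ∈ Δ'_D} min_i E_{ĉ∼p}[ĉ(i) + sup_π (A_π - ĉ(y(π)))]
  ≤ E_{ε,Z}[sup_π (A_π + 2 ε(y(π)) Z)]`,
the supremum over `p` being expressed by quantifying over all `p ∈ Δ'_D`. -/
theorem stmt9 (K : ℕ) (hK : 1 ≤ K) (L : ℝ) (hL : (K : ℝ) ≤ L)
    {P : Type*} [Fintype P] [Nonempty P] (A : P → ℝ) (y : P → Fin K)
    {Ω : Type*} [MeasurableSpace Ω] (μ : Measure Ω) [IsProbabilityMeasure μ]
    (eps : Ω → Fin K → ℝ) (Z : Ω → ℝ)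
    (heps_meas : Measurable eps) (hZ_meas : Measurable Z)
    (hlaw : Measure.map (fun ω => (eps ω, Z ω)) μ
      = (Measure.pi fun _ : Fin K => signLaw).prod (zLaw K L)) :
    ∀ p : (Fin K → ℝ) → ℝ,
      (∀ v ∈ bigD K L, 0 ≤ p v) → ∑ v ∈ bigD K L, p v = 1 →
      (∀ i : Fin K, p (Pi.single i L) ≤ 1 / L) →
      Finset.univ.inf' (Finset.univ_nonempty_iff.mpr (Fin.pos_iff_nonempty.mp hK))
        (fun i => ∫ v, (v i + Finset.univ.sup' Finset.univ_nonempty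
            (fun π => A π - v (y π))) ∂(vecMeas (bigD K L) p))
      ≤ ∫ ω, Finset.univ.sup' Finset.univ_nonempty
          (fun π => A π + 2 * eps ω (y π) * Z ω) ∂μ := by
  intro p hp hsum hple
  have hK0 : (0:ℝ) < K := by exact_mod_cast hK
  have hL0 : (0:ℝ) < L := lt_of_lt_of_le hK0 hL
  have h2K : (0:ℝ) < 2 ^ K := by positivity
  -- the maximizer
  obtain ⟨πs, -, hπs⟩ := Finset.exists_mem_eq_sup' (Finset.univ_nonempty (α := P)) A
  set S : ℝ := Finset.univ.sup' Finset.univ_nonempty A with hSdef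
  set js : Fin K := y πs with hjs
  set F : (Fin K → ℝ) → ℝ := fun v =>
    Finset.univ.sup' Finset.univ_nonempty (fun π => A π - v (y π)) with hFdef
  set gE : (Fin K → Bool) → ℝ := fun s =>
    Finset.univ.sup' Finset.univ_nonempty (fun π => A π + 2 * sgn s (y π) * L) with hgEdef
  set T : ℝ := ∑ s : Fin K → Bool, gE s with hTdef
  set Fs : ℝ := F (Pi.single js L) with hFsdef
  -- expansion of sums over bigD
  have h0notin : (0 : Fin K → ℝ) ∉ Finset.univ.image (fun i : Fin K => Pi.single i L) := by
    intro h
    obtain ⟨i, -, hi⟩ := Finset.mem_image.1 h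
    have h2 := congrFun hi i
    rw [Pi.single_eq_same, Pi.zero_apply] at h2
    exact absurd h2 (ne_of_gt hL0)
  have hexp : ∀ g : (Fin K → ℝ) → ℝ,
      ∑ v ∈ bigD K L, g v = g 0 + ∑ i : Fin K, g (Pi.single i L) := by
    intro g
    rw [bigD, Finset.sum_insert h0notin, Finset.sum_image]
    intro i _ i' _ h
    have := congrFun h i
    beta_reduce at this
    rw [Pi.single_eq_same] at this
    by_contra hne
    rw [Pi.single_eq_of_ne hne] at this
    exact absurd this (ne_of_gt hL0)
  -- membership facts
  have hmem0 : (0 : Fin K → ℝ) ∈ bigD K L := Finset.mem_insert_self _ _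
  have hmemi : ∀ i : Fin K, Pi.single i L ∈ bigD K L := fun i =>
    Finset.mem_insert_of_mem (Finset.mem_image_of_mem _ (Finset.mem_univ i))
  -- normalization
  have hsum' : p 0 + ∑ i : Fin K, p (Pi.single i L) = 1 := by rw [← hexp p]; exact hsum
  -- LHS at js
  refine le_trans (Finset.inf'_le _ (Finset.mem_univ js)) ?_
  -- measurability of the LHS integrand
  have hFmeas : Measurable F := by
    have h := Finset.measurable_sup' (s := (Finset.univ : Finset P)) Finset.univ_nonempty
      (f := fun π (v : Fin K → ℝ) => A π - v (y π))
      (fun π _ => measurable_const.sub (measurable_pi_apply (y π)))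
    have heq : F = Finset.univ.sup' Finset.univ_nonempty
        (fun π (v : Fin K → ℝ) => A π - v (y π)) := by
      funext v
      rw [hFdef]
      exact (Finset.sup'_apply Finset.univ_nonempty
        (fun π (v : Fin K → ℝ) => A π - v (y π)) v).symm
    rw [heq]; exact h
  have hfmeas : Measurable (fun v : Fin K → ℝ => v js + F v) :=
    (measurable_pi_apply js).add hFmeas
  have hLHS : (∫ v, (v js + Finset.univ.sup' Finset.univ_nonempty
      (fun π => A π - v (y π))) ∂(vecMeas (bigD K L) p))
      = ∑ v ∈ bigD K L, p v * (v js + F v) := by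
    rw [vecMeas, integral_sum_smul_dirac _ _ (fun v _ => ENNReal.ofReal_ne_top) _ _ hfmeas]
    exact Finset.sum_congr rfl fun v hv => by rw [ENNReal.toReal_ofReal (hp v hv)]
  -- facts about F
  have hF0 : F 0 = S := by
    rw [hFdef, hSdef]
    exact Finset.sup'_congr _ rfl (fun π _ => by simp)
  have hFle : ∀ i : Fin K, F (Pi.single i L) ≤ S := by
    intro i
    refine Finset.sup'_le _ _ fun π _ => ?_
    have h1 : (0:ℝ) ≤ (Pi.single i L : Fin K → ℝ) (y π) := by
      by_cases hyi : y π = i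
      · rw [hyi, Pi.single_eq_same]; exact hL0.le
      · rw [Pi.single_eq_of_ne hyi]
    have h2 : A π ≤ S := Finset.le_sup' A (Finset.mem_univ π)
    linarith
  set E : ℝ := ∑ i ∈ Finset.univ.erase js, p (Pi.single i L) with hEdef
  have hsum'' : p 0 + (p (Pi.single js L) + E) = 1 := by
    have h := hsum'
    rw [← Finset.add_sum_erase Finset.univ (fun i => p (Pi.single i L))
      (Finset.mem_univ js)] at h
    exact h
  have hEbound : ∑ i ∈ Finset.univ.erase js, p (Pi.single i L) *
      ((Pi.single i L : Fin K → ℝ) js + F (Pi.single i L)) ≤ E * S := by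
    rw [hEdef, Finset.sum_mul]
    refine Finset.sum_le_sum fun i hi => ?_
    have hine : js ≠ i := Ne.symm (Finset.ne_of_mem_erase hi)
    rw [Pi.single_eq_of_ne hine, zero_add]
    exact mul_le_mul_of_nonneg_left (hFle i) (hp _ (hmemi i))
  have hLHSle : ∑ v ∈ bigD K L, p v * (v js + F v)
      ≤ p 0 * S + (p (Pi.single js L) * (L + Fs) + E * S) := by
    rw [hexp (fun v => p v * (v js + F v))]
    have hsplit : ∑ i : Fin K, p (Pi.single i L) *
        ((Pi.single i L : Fin K → ℝ) js + F (Pi.single i L))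
        = p (Pi.single js L) * ((Pi.single js L : Fin K → ℝ) js + F (Pi.single js L))
          + ∑ i ∈ Finset.univ.erase js, p (Pi.single i L) *
              ((Pi.single i L : Fin K → ℝ) js + F (Pi.single i L)) :=
      (Finset.add_sum_erase _ _ (Finset.mem_univ js)).symm
    have hjs2 : (Pi.single js L : Fin K → ℝ) js = L := by simp
    have h00 : p 0 * ((0 : Fin K → ℝ) js + F 0) = p 0 * S := by
      rw [hF0, Pi.zero_apply, zero_add]
    calc (fun v => p v * (v js + F v)) 0
          + ∑ i : Fin K, (fun v => p v * (v js + F v)) (Pi.single i L)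
        = p 0 * ((0 : Fin K → ℝ) js + F 0)
          + ∑ i : Fin K, p (Pi.single i L) *
              ((Pi.single i L : Fin K → ℝ) js + F (Pi.single i L)) := rfl
      _ = p 0 * S + (p (Pi.single js L) * (L + Fs)
          + ∑ i ∈ Finset.univ.erase js, p (Pi.single i L) *
              ((Pi.single i L : Fin K → ℝ) js + F (Pi.single i L))) := by
          rw [h00, hsplit, hjs2, hFsdef]
      _ ≤ p 0 * S + (p (Pi.single js L) * (L + Fs) + E * S) := by
          have := hEbound; linarith
  -- RHS computation
  have hgmeas : Measurable (fun q : (Fin K → ℝ) × ℝ =>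
      Finset.univ.sup' Finset.univ_nonempty (fun π => A π + 2 * q.1 (y π) * q.2)) := by
    have h := Finset.measurable_sup' (s := (Finset.univ : Finset P)) Finset.univ_nonempty
      (f := fun π (q : (Fin K → ℝ) × ℝ) => A π + 2 * q.1 (y π) * q.2)
      (fun π _ => measurable_const.add
        (((measurable_const.mul ((measurable_pi_apply (y π)).comp measurable_fst)).mul
          measurable_snd)))
    have heq : (fun q : (Fin K → ℝ) × ℝ =>
        Finset.univ.sup' Finset.univ_nonempty (fun π => A π + 2 * q.1 (y π) * q.2))
        = Finset.univ.sup' Finset.univ_nonempty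
            (fun π (q : (Fin K → ℝ) × ℝ) => A π + 2 * q.1 (y π) * q.2) := by
      funext q
      exact (Finset.sup'_apply Finset.univ_nonempty
        (fun π (q : (Fin K → ℝ) × ℝ) => A π + 2 * q.1 (y π) * q.2) q).symm
    rw [heq]; exact h
  have hRHS : (∫ ω, Finset.univ.sup' Finset.univ_nonempty
      (fun π => A π + 2 * eps ω (y π) * Z ω) ∂μ)
      = ∑ q : (Fin K → Bool) × Bool, (atomW K L q).toReal *
          (Finset.univ.sup' Finset.univ_nonempty
            (fun π => A π + 2 * (atomX K L q).1 (y π) * (atomX K L q).2)) := by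
    have h1 : (∫ ω, Finset.univ.sup' Finset.univ_nonempty
        (fun π => A π + 2 * eps ω (y π) * Z ω) ∂μ)
        = ∫ q, (Finset.univ.sup' Finset.univ_nonempty
            (fun π => A π + 2 * q.1 (y π) * q.2))
              ∂(Measure.map (fun ω => (eps ω, Z ω)) μ) :=
      (integral_map (heps_meas.prodMk hZ_meas).aemeasurable
        hgmeas.aestronglyMeasurable).symm
    rw [h1, hlaw, joint_eq K L]
    exact integral_sum_smul_dirac _ _
      (fun q _ => ENNReal.mul_ne_top (by simp) (by split_ifs <;> exact ENNReal.ofReal_ne_top))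
      _ _ hgmeas
  -- simplify the RHS sum
  have hKL1 : (K : ℝ) / L ≤ 1 := (div_le_one hL0).2 hL
  have hKL0 : (0:ℝ) ≤ (K : ℝ) / L := div_nonneg hK0.le hL0.le
  have hWtrue : ∀ x : Fin K → Bool, (atomW K L (x, true)).toReal = (2:ℝ)⁻¹ ^ K * ((K:ℝ)/L) := by
    intro x
    rw [atomW]
    simp only [if_true]
    rw [ENNReal.toReal_mul, ENNReal.toReal_ofReal hKL0, ENNReal.inv_pow,
      ENNReal.toReal_pow, ENNReal.toReal_inv]
    norm_num
  have hWfalse : ∀ x : Fin K → Bool,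
      (atomW K L (x, false)).toReal = (2:ℝ)⁻¹ ^ K * (1 - (K:ℝ)/L) := by
    intro x
    rw [atomW]
    simp only [Bool.false_eq_true, if_false]
    rw [ENNReal.toReal_mul, ENNReal.toReal_ofReal (by linarith : (0:ℝ) ≤ 1 - (K:ℝ)/L),
      ENNReal.inv_pow, ENNReal.toReal_pow, ENNReal.toReal_inv]
    norm_num
  have hXtrue : ∀ x : Fin K → Bool,
      (Finset.univ.sup' Finset.univ_nonempty
        (fun π => A π + 2 * (atomX K L (x, true)).1 (y π) * (atomX K L (x, true)).2)) = gE x := by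
    intro x
    rw [hgEdef]
    refine Finset.sup'_congr _ rfl fun π _ => ?_
    simp [atomX]
  have hXfalse : ∀ x : Fin K → Bool,
      (Finset.univ.sup' Finset.univ_nonempty
        (fun π => A π + 2 * (atomX K L (x, false)).1 (y π) * (atomX K L (x, false)).2)) = S := by
    intro x
    rw [hSdef]
    refine Finset.sup'_congr _ rfl fun π _ => ?_
    simp [atomX]
  have hbsum : ∀ x : Fin K → Bool, (∑ b : Bool, (atomW K L (x, b)).toReal *
      (Finset.univ.sup' Finset.univ_nonempty
        (fun π => A π + 2 * (atomX K L (x, b)).1 (y π) * (atomX K L (x, b)).2)))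
      = (2:ℝ)⁻¹ ^ K * ((K:ℝ)/L) * gE x + (2:ℝ)⁻¹ ^ K * (1 - (K:ℝ)/L) * S := by
    intro x
    rw [Fintype.sum_bool, hWtrue x, hWfalse x, hXtrue x, hXfalse x]
  have hpow1 : (2:ℝ) ^ K * (2:ℝ)⁻¹ ^ K = 1 := by
    rw [← mul_pow]; norm_num
  have hRHS2 : ∑ q : (Fin K → Bool) × Bool, (atomW K L q).toReal *
      (Finset.univ.sup' Finset.univ_nonempty
        (fun π => A π + 2 * (atomX K L q).1 (y π) * (atomX K L q).2))
      = (K:ℝ)/L * ((2:ℝ)⁻¹ ^ K * T) + (1 - (K:ℝ)/L) * S := by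
    rw [Fintype.sum_prod_type]
    rw [Finset.sum_congr rfl (fun x _ => hbsum x)]
    rw [Finset.sum_add_distrib, ← Finset.mul_sum, Finset.sum_const, Finset.card_univ,
      nsmul_eq_mul, card_bool_fun K, ← hTdef]
    linear_combination ((1 - (K:ℝ)/L) * S) * hpow1
  -- key claims
  have hTa : (2:ℝ) ^ K * S ≤ T := by
    rw [hπs, hTdef, hgEdef]
    exact claim_T A y L πs
  have hAle : ∀ π : P, A π ≤ S := fun π => Finset.le_sup' A (Finset.mem_univ π)
  have hTc : (2:ℝ) ^ K * (L + Fs) ≤ T := by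
    obtain ⟨π1, -, hπ1⟩ := Finset.exists_mem_eq_sup'
      (Finset.univ_nonempty (α := P)) (fun π => A π - (Pi.single js L : Fin K → ℝ) (y π))
    have hFs1 : Fs = A π1 - (Pi.single js L : Fin K → ℝ) (y π1) := hπ1
    by_cases hy1 : y π1 = js
    · rw [hy1, Pi.single_eq_same] at hFs1
      have hc : L + Fs ≤ S := by
        have := hAle π1
        rw [hFs1]; linarith
      calc (2:ℝ) ^ K * (L + Fs) ≤ (2:ℝ) ^ K * S :=
            mul_le_mul_of_nonneg_left hc h2K.le
        _ ≤ T := hTa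
    · rw [Pi.single_eq_of_ne hy1, sub_zero] at hFs1
      have hcl := claim_T2 A y L πs π1 hy1
      rw [← hgEdef, ← hTdef] at hcl
      have h1 : A π1 ≤ A πs := by rw [← hπs]; exact hAle π1
      rw [hFs1]; linarith [mul_le_mul_of_nonneg_left h1 h2K.le, hcl]
  have hinvpow : (0:ℝ) < (2:ℝ)⁻¹ ^ K := by positivity
  have hQa : S ≤ (2:ℝ)⁻¹ ^ K * T := by
    have h := mul_le_mul_of_nonneg_left hTa hinvpow.le
    calc S = (2:ℝ)⁻¹ ^ K * ((2:ℝ) ^ K * S) := by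
          rw [← mul_assoc, mul_comm ((2:ℝ)⁻¹ ^ K), hpow1, one_mul]
      _ ≤ (2:ℝ)⁻¹ ^ K * T := h
  have hQc : L + Fs ≤ (2:ℝ)⁻¹ ^ K * T := by
    have h := mul_le_mul_of_nonneg_left hTc hinvpow.le
    calc L + Fs = (2:ℝ)⁻¹ ^ K * ((2:ℝ) ^ K * (L + Fs)) := by
          rw [← mul_assoc, mul_comm ((2:ℝ)⁻¹ ^ K), hpow1, one_mul]
      _ ≤ (2:ℝ)⁻¹ ^ K * T := h
  -- final arithmetic
  have hq0 : 0 ≤ p (Pi.single js L) := hp _ (hmemi js)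
  have hq1 : p (Pi.single js L) ≤ 1/L := hple js
  have key : p (Pi.single js L) * (L + Fs - S) ≤ (K:ℝ)/L * ((2:ℝ)⁻¹ ^ K * T - S) := by
    rcases le_or_gt (L + Fs) S with h | h
    · have l1 : p (Pi.single js L) * (L + Fs - S) ≤ 0 :=
        mul_nonpos_of_nonneg_of_nonpos hq0 (by linarith)
      have l2 : 0 ≤ (K:ℝ)/L * ((2:ℝ)⁻¹ ^ K * T - S) := mul_nonneg hKL0 (by linarith [hQa])
      linarith
    · have l1 : p (Pi.single js L) * (L + Fs - S) ≤ 1/L * (L + Fs - S) :=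
        mul_le_mul_of_nonneg_right hq1 (by linarith)
      have l2 : 1/L * (L + Fs - S) ≤ 1/L * ((2:ℝ)⁻¹ ^ K * T - S) := by
        have : L + Fs - S ≤ (2:ℝ)⁻¹ ^ K * T - S := by linarith [hQc]
        exact mul_le_mul_of_nonneg_left this (by positivity)
      have l3 : 1/L * ((2:ℝ)⁻¹ ^ K * T - S) ≤ (K:ℝ)/L * ((2:ℝ)⁻¹ ^ K * T - S) := by
        have h1K : (1:ℝ) ≤ (K:ℝ) := by exact_mod_cast hK
        have : (1:ℝ)/L ≤ (K:ℝ)/L := by gcongr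
        exact mul_le_mul_of_nonneg_right this (by linarith [hQa])
      linarith
  have hmul : (p 0 + (p (Pi.single js L) + E)) * S = 1 * S := by rw [hsum'']
  have hfinal : p 0 * S + (p (Pi.single js L) * (L + Fs) + E * S)
      ≤ (K:ℝ)/L * ((2:ℝ)⁻¹ ^ K * T) + (1 - (K:ℝ)/L) * S := by
    linarith [key, hmul]
  rw [hLHS, hRHS, hRHS2]
  exact le_trans hLHSle hfinal
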